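/- Let L ∈ [0,1]^{k×d}, Σ a finite set, Φ ∈ Σ^{k×d}, and let G : [k] × Σ → ℝ^k satisfy Σ_{a=1}^k ( G(a, Φ_{a,x})_b − G(a, Φ_{a,x})_c ) = L_{b,x} − L_{c,x} for all b, c ∈ [k] and x ∈ [d] (an unbiased estimation function). Let β = max_{a,σ,b} |G(a,σ)_b|, c_G = max(1, 2kβ), and suppose 0 < η ≤ 1/c_G². Let q ∈ ℝ^k be a probability vector, γ = kβ√η, and p = (1−γ) q + γ 𝟙/k. Then p is a probability vector, η G(a, Φ_{a,x})_b / p_a ≥ −1 for all a, b, x, and for every x ∈ [d]: (1/η)(p − q)ᵀ L e_x + (1/η²) Σ_{a=1}^k p_a Ψ_q( η G(a, Φ_{a,x}) / p_a ) ≤ 2kβ/√η. -/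

import Mathlib

/-- `Ψ_q(z) = ∑_a q_a (exp(-z_a) + z_a - 1)`. -/
noncomputable def Psi {k : ℕ} (q z : Fin k → ℝ) : ℝ :=
  ∑ a, q a * (Real.exp (-z a) + z a - 1)

set_option maxHeartbeats 1000000 in
/-- Globally observable games: with an unbiased estimation function `G` of
magnitude `β = ‖G‖_∞`, `c_G = max(1, 2kβ)`, `η ≤ 1/c_G²`, `γ = kβ√η` and the
mixed distribution `p = (1-γ)q + γ𝟙/k`, the vector `p` is a probability
vector, the loss estimates are bounded below by `-1/η`, and the transfer plus
stability terms are at most `2kβ/√η`. -/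
theorem stmt7 (k d : ℕ) (hk : 0 < k) (hd : 0 < d) (S : Type*) [Fintype S]
    [Nonempty S]
    (L : Fin k → Fin d → ℝ) (hL : ∀ a x, L a x ∈ Set.Icc (0 : ℝ) 1)
    (Φ : Fin k → Fin d → S)
    (G : Fin k → S → Fin k → ℝ)
    (hG : ∀ (b c : Fin k) (x : Fin d),
      ∑ a, (G a (Φ a x) b - G a (Φ a x) c) = L b x - L c x)
    (β : ℝ) (hβ : β = ⨆ a : Fin k, ⨆ σ : S, ⨆ b : Fin k, |G a σ b|)
    (cG : ℝ) (hcG : cG = max 1 (2 * k * β))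
    (η : ℝ) (hη : 0 < η) (hηcG : η ≤ 1 / cG ^ 2)
    (q : Fin k → ℝ) (hq0 : ∀ a, 0 ≤ q a) (hq1 : ∑ a, q a = 1)
    (γ : ℝ) (hγ : γ = k * β * Real.sqrt η)
    (p : Fin k → ℝ) (hp : ∀ a, p a = (1 - γ) * q a + γ / k) :
    (∀ a, 0 ≤ p a) ∧ (∑ a, p a = 1) ∧
    (∀ (a b : Fin k) (x : Fin d), -1 ≤ η * G a (Φ a x) b / p a) ∧
    (∀ x : Fin d,
      (1 / η) * (∑ a, (p a - q a) * L a x)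
        + (1 / η ^ 2) * ∑ a, p a * Psi q (fun b => η * G a (Φ a x) b / p a)
        ≤ 2 * k * β / Real.sqrt η) := by
  have hkR : (0:ℝ) < k := by exact_mod_cast hk
  have a0 : Fin k := ⟨0, hk⟩
  have hGβ : ∀ a σ b, |G a σ b| ≤ β := by
    intro a σ b
    rw [hβ]
    calc |G a σ b| ≤ ⨆ b, |G a σ b| :=
          le_ciSup (f := fun b => |G a σ b|) (Finite.bddAbove_range _) b
      _ ≤ ⨆ σ, ⨆ b, |G a σ b| :=
          le_ciSup (f := fun σ => ⨆ b, |G a σ b|) (Finite.bddAbove_range _) σ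
      _ ≤ ⨆ a, ⨆ σ, ⨆ b, |G a σ b| :=
          le_ciSup (f := fun a => ⨆ σ, ⨆ b, |G a σ b|) (Finite.bddAbove_range _) a
  have hβ0 : 0 ≤ β := le_trans (abs_nonneg _) (hGβ a0 (Classical.arbitrary S) a0)
  have hcG1 : (1:ℝ) ≤ cG := by rw [hcG]; exact le_max_left _ _
  have hcGβ : 2 * k * β ≤ cG := by rw [hcG]; exact le_max_right _ _
  have hcG0 : (0:ℝ) < cG := lt_of_lt_of_le one_pos hcG1
  have hηcG2 : η * cG ^ 2 ≤ 1 := (le_div_iff₀ (by positivity)).1 hηcG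
  have hcGsq : (1:ℝ) ≤ cG ^ 2 := by nlinarith
  have hη1 : η ≤ 1 := le_trans hηcG (by rw [div_le_one (by positivity)]; exact hcGsq)
  set s := Real.sqrt η with hs
  have hs0 : 0 < s := Real.sqrt_pos.2 hη
  have hs2 : s ^ 2 = η := Real.sq_sqrt hη.le
  have hs1 : s ≤ 1 := by nlinarith
  have hscG : s * cG ≤ 1 := by nlinarith [sq_nonneg (s * cG - 1)]
  have hγ0 : 0 ≤ γ := by rw [hγ]; positivity
  have hγ1 : γ ≤ 1/2 := by
    rw [hγ]; nlinarith [mul_le_mul_of_nonneg_right hcGβ hs0.le]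
  have hγk : γ / k = β * s := by rw [hγ]; field_simp
  have hp0 : ∀ a, 0 ≤ p a := by
    intro a
    rw [hp a]
    have h1 : 0 ≤ (1 - γ) * q a := mul_nonneg (by linarith) (hq0 a)
    have h2 : 0 ≤ γ / k := div_nonneg hγ0 hkR.le
    linarith
  have hplow : ∀ a, β * s ≤ p a := by
    intro a
    rw [hp a, hγk]
    have h1 : 0 ≤ (1 - γ) * q a := mul_nonneg (by linarith) (hq0 a)
    linarith
  have hpsum : ∑ a, p a = 1 := by
    simp only [hp]
    rw [Finset.sum_add_distrib, ← Finset.mul_sum, hq1, Finset.sum_const,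
      Finset.card_univ, Fintype.card_fin, nsmul_eq_mul]
    field_simp
    ring
  have hz : ∀ (a b : Fin k) (x : Fin d), |η * G a (Φ a x) b / p a| ≤ s := by
    intro a b x
    by_cases hpa : p a = 0
    · have hβz : β = 0 := by nlinarith [hplow a]
      have hG0 : G a (Φ a x) b = 0 :=
        abs_eq_zero.1 (le_antisymm (hβz ▸ hGβ a (Φ a x) b) (abs_nonneg _))
      simp [hG0, hs0.le]
    · have hpa0 : 0 < p a := lt_of_le_of_ne (hp0 a) (Ne.symm hpa)
      rw [abs_div, abs_of_pos hpa0, div_le_iff₀ hpa0, abs_mul, abs_of_pos hη]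
      calc η * |G a (Φ a x) b| ≤ η * β :=
            mul_le_mul_of_nonneg_left (hGβ a (Φ a x) b) hη.le
        _ = s * (β * s) := by rw [← hs2]; ring
        _ ≤ s * p a := mul_le_mul_of_nonneg_left (hplow a) hs0.le
  refine ⟨hp0, hpsum, fun a b x => ?_, fun x => ?_⟩
  · exact neg_le_of_abs_le (le_trans (hz a b x) hs1)
  · -- main inequality
    have hterm2 : ∀ a : Fin k,
        p a * Psi q (fun b => η * G a (Φ a x) b / p a) ≤ η * s * β := by
      intro a
      have hΨ : Psi q (fun b => η * G a (Φ a x) b / p a)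
          ≤ ∑ b, q b * (η * G a (Φ a x) b / p a) ^ 2 := by
        unfold Psi
        apply Finset.sum_le_sum
        intro b _
        dsimp only
        set z := η * G a (Φ a x) b / p a with hzdef
        have h1 : |(-z)| ≤ 1 := by rw [abs_neg]; exact le_trans (hz a b x) hs1
        have h2 := Real.abs_exp_sub_one_sub_id_le h1
        have h3 : Real.exp (-z) - 1 - (-z) ≤ (-z) ^ 2 := le_trans (le_abs_self _) h2
        have h3'' : (-z) ^ 2 = z ^ 2 := by ring
        have h3' : Real.exp (-z) + z - 1 ≤ z ^ 2 := by linarith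
        exact mul_le_mul_of_nonneg_left h3' (hq0 b)
      have h4 : ∀ b : Fin k,
          p a * (q b * (η * G a (Φ a x) b / p a) ^ 2) ≤ q b * (η * s * β) := by
        intro b
        by_cases hpa : p a = 0
        · rw [hpa, zero_mul]; exact mul_nonneg (hq0 b) (by positivity)
        · have hpa0 : 0 < p a := lt_of_le_of_ne (hp0 a) (Ne.symm hpa)
          set z := η * G a (Φ a x) b / p a with hzdef
          have hz1 : z * p a = η * G a (Φ a x) b := div_mul_cancel₀ _ hpa
          have h5 : p a * z ^ 2 = (η * G a (Φ a x) b) * z := by rw [← hz1]; ring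
          have h6 : (η * G a (Φ a x) b) * z ≤ (η * β) * s := by
            calc (η * G a (Φ a x) b) * z ≤ |(η * G a (Φ a x) b) * z| := le_abs_self _
              _ = |η * G a (Φ a x) b| * |z| := abs_mul _ _
              _ ≤ (η * β) * s := by
                  apply mul_le_mul _ (hz a b x) (abs_nonneg _) (by positivity)
                  rw [abs_mul, abs_of_pos hη]
                  exact mul_le_mul_of_nonneg_left (hGβ a (Φ a x) b) hη.le
          have h7 : p a * z ^ 2 ≤ η * s * β := by rw [h5]; linarith [h6]
          calc p a * (q b * z ^ 2) = q b * (p a * z ^ 2) := by ring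
            _ ≤ q b * (η * s * β) := mul_le_mul_of_nonneg_left h7 (hq0 b)
      calc p a * Psi q (fun b => η * G a (Φ a x) b / p a)
          ≤ p a * ∑ b, q b * (η * G a (Φ a x) b / p a) ^ 2 :=
            mul_le_mul_of_nonneg_left hΨ (hp0 a)
        _ = ∑ b, p a * (q b * (η * G a (Φ a x) b / p a) ^ 2) := Finset.mul_sum _ _ _
        _ ≤ ∑ b, q b * (η * s * β) := Finset.sum_le_sum (fun b _ => h4 b)
        _ = η * s * β := by rw [← Finset.sum_mul, hq1, one_mul]
    have hT2 : ∑ a, p a * Psi q (fun b => η * G a (Φ a x) b / p a)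
        ≤ k * (η * s * β) := by
      calc ∑ a, p a * Psi q (fun b => η * G a (Φ a x) b / p a)
          ≤ ∑ _a : Fin k, η * s * β := Finset.sum_le_sum (fun a _ => hterm2 a)
        _ = k * (η * s * β) := by
            rw [Finset.sum_const, Finset.card_univ, Fintype.card_fin, nsmul_eq_mul]
    have hterm1 : ∀ a : Fin k, (p a - q a) * L a x ≤ γ / k := by
      intro a
      obtain ⟨hL0, hL1⟩ := hL a x
      rw [le_div_iff₀ hkR]
      have hkq : (k:ℝ) * (p a - q a) = γ * (1 - k * q a) := by
        rw [hp a]; field_simp; ring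
      have h8 : (p a - q a) * L a x * k = γ * (1 - k * q a) * L a x := by
        linear_combination L a x * hkq
      rw [h8]
      nlinarith [mul_nonneg (mul_nonneg hγ0 hkR.le) (mul_nonneg (hq0 a) hL0),
        mul_nonneg hγ0 (by linarith : (0:ℝ) ≤ 1 - L a x)]
    have hT1 : ∑ a, (p a - q a) * L a x ≤ γ := by
      calc ∑ a, (p a - q a) * L a x ≤ ∑ _a : Fin k, γ / k :=
            Finset.sum_le_sum (fun a _ => hterm1 a)
        _ = γ := by
            rw [Finset.sum_const, Finset.card_univ, Fintype.card_fin, nsmul_eq_mul]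
            field_simp
    have e1 : (1/η) * (∑ a, (p a - q a) * L a x) ≤ (1/η) * γ :=
      mul_le_mul_of_nonneg_left hT1 (by positivity)
    have e2 : (1/η^2) * (∑ a, p a * Psi q (fun b => η * G a (Φ a x) b / p a))
        ≤ (1/η^2) * (k * (η * s * β)) :=
      mul_le_mul_of_nonneg_left hT2 (by positivity)
    calc (1 / η) * (∑ a, (p a - q a) * L a x)
        + (1 / η ^ 2) * ∑ a, p a * Psi q (fun b => η * G a (Φ a x) b / p a)
        ≤ (1/η) * γ + (1/η^2) * (k * (η * s * β)) := add_le_add e1 e2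
      _ = 2 * k * β / s := by
          rw [hγ, ← hs2]; field_simp; ring
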